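/- Let f(x) = (1/2)xᵀQx + qᵀx + c with Q symmetric positive semidefinite, γ ≥ 0, G = (I+γQ)^{-1}, and consider ẋ = −αQ(x+γu) − αq + αu with output y = x + γu, α > 0. Then with storage function S(x) = (1/(2α))(x−x̄)ᵀG(x−x̄), for any equilibrium (x̄,ū), the derivative along trajectories satisfies exactly Ṡ = ỹᵀũ − ỹᵀ(GQ)ỹ − γũᵀGũ, where ỹ = y−ȳ, ũ = u−ū. Hence the system is input-strictly and output-strictly equilibrium-independent passive with indices ν = λ_min(γG) and ρ = λ_min(GQ). -/

import Mathlib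

open Matrix

/-- Smallest eigenvalue of a real matrix, as the infimum of its real spectrum. -/
noncomputable def lamMin {n : ℕ} (M : Matrix (Fin n) (Fin n) ℝ) : ℝ :=
  sInf (spectrum ℝ M)

/-- Rayleigh bound: for a real symmetric matrix, `λ_min(M) ‖v‖² ≤ vᵀMv`. -/
lemma lamMin_rayleigh {n : ℕ} {M : Matrix (Fin n) (Fin n) ℝ} (hM : M.IsHermitian)
    (v : Fin n → ℝ) : lamMin M * (v ⬝ᵥ v) ≤ v ⬝ᵥ M.mulVec v := by
  set c := lamMin M with hc
  have hcle : ∀ i, c ≤ hM.eigenvalues i := fun i =>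
    csInf_le (Matrix.finite_spectrum M).bddBelow (hM.eigenvalues_mem_spectrum_real i)
  -- `M - c • 1` is positive semidefinite
  have hU : (hM.eigenvectorUnitary : Matrix (Fin n) (Fin n) ℝ) *
      star (hM.eigenvectorUnitary : Matrix (Fin n) (Fin n) ℝ) = 1 :=
    (Matrix.mem_unitaryGroup_iff).mp hM.eigenvectorUnitary.2
  have hdiag : Matrix.PosSemidef
      (Matrix.diagonal (fun i => hM.eigenvalues i - c) : Matrix (Fin n) (Fin n) ℝ) :=
    Matrix.posSemidef_diagonal_iff.2 fun i => sub_nonneg.2 (hcle i)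
  have hpsd : (M - c • (1 : Matrix (Fin n) (Fin n) ℝ)).PosSemidef := by
    have hrw : M - c • (1 : Matrix (Fin n) (Fin n) ℝ) =
        (hM.eigenvectorUnitary : Matrix (Fin n) (Fin n) ℝ) *
          (Matrix.diagonal (fun i => hM.eigenvalues i - c)) *
          (hM.eigenvectorUnitary : Matrix (Fin n) (Fin n) ℝ)ᴴ := by
      have hst := hM.spectral_theorem
      simp only [Unitary.conjStarAlgAut_apply, Unitary.coe_star] at hst
      have hdeq : (Matrix.diagonal (fun i => hM.eigenvalues i - c) : Matrix (Fin n) (Fin n) ℝ) =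
          Matrix.diagonal ((RCLike.ofReal : ℝ → ℝ) ∘ hM.eigenvalues) - c • 1 := by
        ext i j
        by_cases h : i = j <;> simp [Matrix.diagonal, h, Matrix.one_apply, Function.comp]
      have hI : (hM.eigenvectorUnitary : Matrix (Fin n) (Fin n) ℝ) * (c • 1) *
          (hM.eigenvectorUnitary : Matrix (Fin n) (Fin n) ℝ)ᴴ = c • 1 := by
        rw [Matrix.mul_smul, Matrix.mul_one, Matrix.smul_mul,
          ← Matrix.star_eq_conjTranspose, hU]
      rw [hdeq, Matrix.mul_sub, Matrix.sub_mul, hI,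
        ← Matrix.star_eq_conjTranspose, ← hst]
    rw [hrw]
    exact hdiag.mul_mul_conjTranspose_same _
  have h0 := hpsd.dotProduct_mulVec_nonneg v
  have hstar : star v = v := by simp
  rw [hstar] at h0
  have hexp : v ⬝ᵥ (M - c • (1 : Matrix (Fin n) (Fin n) ℝ)).mulVec v =
      v ⬝ᵥ M.mulVec v - c * (v ⬝ᵥ v) := by
    rw [Matrix.sub_mulVec, dotProduct_sub]
    congr 1
    rw [Matrix.smul_mulVec, Matrix.one_mulVec, dotProduct_smul, smul_eq_mul]
  rw [hexp] at h0
  linarith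

/-- Symmetric matrices can be moved across the dot product. -/
lemma dotProduct_mulVec_symm {n : ℕ} {G : Matrix (Fin n) (Fin n) ℝ} (hG : G.IsHermitian)
    (v w : Fin n → ℝ) : v ⬝ᵥ G.mulVec w = w ⬝ᵥ G.mulVec v := by
  have hGt : Gᵀ = G := by
    have := hG.eq
    rwa [Matrix.conjTranspose_eq_transpose_of_trivial] at this
  rw [Matrix.dotProduct_mulVec, ← Matrix.mulVec_transpose, hGt, dotProduct_comm]

/-- For the quadratic objective `f(x) = ½xᵀQx + qᵀx + c` and agent
`ẋ = -αQ(x+γu) - αq + αu`, `y = x + γu`, the storage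
`S(x) = (1/(2α))(x-x̄)ᵀG(x-x̄)` with `G = (I+γQ)⁻¹` satisfies exactly
`Ṡ = ỹᵀũ - ỹᵀGQỹ - γũᵀGũ`; hence input/output-strict equilibrium-independent
passivity with indices `ν = λ_min(γG)` and `ρ = λ_min(GQ)`. -/
theorem stmt_7 {n : ℕ} (Q : Matrix (Fin n) (Fin n) ℝ) (q : Fin n → ℝ) (c : ℝ)
    (γ α : ℝ) (hQ : Q.PosSemidef) (hγ : 0 ≤ γ) (hα : 0 < α)
    (x u xbar ubar : Fin n → ℝ)
    (heq : (0 : Fin n → ℝ) = -(Q.mulVec (xbar + γ • ubar)) - q + ubar) :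
    (1 / α) * ((x - xbar) ⬝ᵥ
        ((1 + γ • Q)⁻¹).mulVec (-(α • Q.mulVec (x + γ • u)) - α • q + α • u)) =
      ((x + γ • u) - (xbar + γ • ubar)) ⬝ᵥ (u - ubar)
        - ((x + γ • u) - (xbar + γ • ubar)) ⬝ᵥ
            (((1 + γ • Q)⁻¹ * Q).mulVec ((x + γ • u) - (xbar + γ • ubar)))
        - γ * ((u - ubar) ⬝ᵥ ((1 + γ • Q)⁻¹).mulVec (u - ubar)) ∧
    (1 / α) * ((x - xbar) ⬝ᵥ
        ((1 + γ • Q)⁻¹).mulVec (-(α • Q.mulVec (x + γ • u)) - α • q + α • u)) ≤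
      ((x + γ • u) - (xbar + γ • ubar)) ⬝ᵥ (u - ubar)
        - lamMin ((1 + γ • Q)⁻¹ * Q) *
            (((x + γ • u) - (xbar + γ • ubar)) ⬝ᵥ ((x + γ • u) - (xbar + γ • ubar)))
        - lamMin (γ • (1 + γ • Q)⁻¹) * ((u - ubar) ⬝ᵥ (u - ubar)) := by
  classical
  set A : Matrix (Fin n) (Fin n) ℝ := 1 + γ • Q with hAdef
  set G : Matrix (Fin n) (Fin n) ℝ := A⁻¹ with hGdef
  set ytil : Fin n → ℝ := (x + γ • u) - (xbar + γ • ubar) with hytil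
  set util : Fin n → ℝ := u - ubar with hutil
  -- A is positive definite, hence invertible
  have hAherm : A.IsHermitian := by
    have h1 : (1 : Matrix (Fin n) (Fin n) ℝ).IsHermitian := Matrix.isHermitian_one
    have h2 : (γ • Q).IsHermitian := by
      unfold Matrix.IsHermitian
      rw [Matrix.conjTranspose_smul, hQ.1.eq]
      simp
    exact h1.add h2
  have hApos : A.PosDef := by
    refine Matrix.PosDef.of_dotProduct_mulVec_pos hAherm (fun v hv => ?_)
    have h1 : (0 : ℝ) < v ⬝ᵥ v := by
      have := dotProduct_star_self_pos_iff (v := v) |>.2 hv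
      simpa using this
    have h2 : (0 : ℝ) ≤ γ * (v ⬝ᵥ Q.mulVec v) := by
      have := hQ.dotProduct_mulVec_nonneg v
      simp only [star_trivial] at this
      exact mul_nonneg hγ (by simpa using this)
    have hsv : star v = v := by simp
    rw [hsv, hAdef, Matrix.add_mulVec, Matrix.one_mulVec, dotProduct_add,
      Matrix.smul_mulVec, dotProduct_smul, smul_eq_mul]
    linarith
  have hdet : IsUnit A.det := Matrix.isUnit_iff_isUnit_det A |>.1 hApos.isUnit
  have hGA : G * A = 1 := Matrix.nonsing_inv_mul A hdet
  have hAG : A * G = 1 := Matrix.mul_nonsing_inv A hdet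
  have hGherm : G.IsHermitian := hAherm.inv
  -- commutation Q G = G Q
  have hcomm : Q * G = G * Q := by
    have hQA : Q * A = A * Q := by
      rw [hAdef]
      noncomm_ring
    calc Q * G = (G * A) * Q * G := by rw [hGA]; noncomm_ring
    _ = G * (A * Q) * G := by noncomm_ring
    _ = G * (Q * A) * G := by rw [hQA]
    _ = G * Q * (A * G) := by noncomm_ring
    _ = G * Q := by rw [hAG, Matrix.mul_one]
  have hGQherm : (G * Q).IsHermitian := by
    unfold Matrix.IsHermitian
    rw [Matrix.conjTranspose_mul, hQ.1.eq, hGherm.eq, hcomm]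
  -- drift rewrite using the equilibrium condition
  have hq : q = ubar - Q.mulVec (xbar + γ • ubar) := by
    have := heq
    funext i
    have h := congrFun this i
    simp only [Pi.zero_apply, Pi.add_apply, Pi.sub_apply, Pi.neg_apply] at h
    simp only [Pi.sub_apply]
    linarith
  have hdrift : -(α • Q.mulVec (x + γ • u)) - α • q + α • u
      = α • (util - Q.mulVec ytil) := by
    rw [hq, hytil, hutil, Matrix.mulVec_sub]
    funext i
    simp only [Pi.add_apply, Pi.sub_apply, Pi.neg_apply, Pi.smul_apply, smul_eq_mul]
    ring
  -- the derivative expression simplifies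
  have hx : x - xbar = ytil - γ • util := by
    rw [hytil, hutil]
    funext i
    simp only [Pi.add_apply, Pi.sub_apply, Pi.smul_apply, smul_eq_mul]
    ring
  have hsymm := dotProduct_mulVec_symm hGherm
  -- key algebraic identity
  have hkey : (1 / α) * ((x - xbar) ⬝ᵥ
      G.mulVec (-(α • Q.mulVec (x + γ • u)) - α • q + α • u)) =
      ytil ⬝ᵥ util - ytil ⬝ᵥ ((G * Q).mulVec ytil) - γ * (util ⬝ᵥ G.mulVec util) := by
    rw [hdrift, Matrix.mulVec_smul, dotProduct_smul, smul_eq_mul, ← mul_assoc,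
      one_div_mul_cancel hα.ne', one_mul, hx]
    -- expand the bilinear form
    simp only [sub_dotProduct, Matrix.mulVec_sub, dotProduct_sub, smul_dotProduct,
      smul_eq_mul, Matrix.mulVec_mulVec]
    -- the cross terms: ỹᵀGũ + γ ũᵀ(GQ)ỹ = ỹᵀũ
    have hcross : ytil ⬝ᵥ G.mulVec util + γ * (util ⬝ᵥ (G * Q).mulVec ytil)
        = ytil ⬝ᵥ util := by
      have h1 : ytil ⬝ᵥ G.mulVec util = util ⬝ᵥ G.mulVec ytil := hsymm _ _
      have h2 : util ⬝ᵥ G.mulVec ytil + γ * (util ⬝ᵥ (G * Q).mulVec ytil)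
          = util ⬝ᵥ ((G + γ • (G * Q)).mulVec ytil) := by
        rw [Matrix.add_mulVec, dotProduct_add, Matrix.smul_mulVec,
          dotProduct_smul, smul_eq_mul]
      have h3 : G + γ • (G * Q) = G * A := by
        rw [hAdef, Matrix.mul_add, Matrix.mul_one, Matrix.mul_smul]
      rw [h1, h2, h3, hGA, Matrix.one_mulVec, dotProduct_comm]
    linarith [hcross]
  refine ⟨hkey, ?_⟩
  rw [hkey]
  -- Rayleigh bounds
  have hR1 : lamMin ((1 + γ • Q)⁻¹ * Q) * (ytil ⬝ᵥ ytil) ≤ ytil ⬝ᵥ ((G * Q).mulVec ytil) :=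
    lamMin_rayleigh hGQherm ytil
  have hγGherm : (γ • G).IsHermitian := by
    unfold Matrix.IsHermitian
    rw [Matrix.conjTranspose_smul, hGherm.eq]
    simp
  have hR2 : lamMin (γ • (1 + γ • Q)⁻¹) * (util ⬝ᵥ util) ≤ γ * (util ⬝ᵥ G.mulVec util) := by
    have := lamMin_rayleigh hγGherm util
    rwa [Matrix.smul_mulVec, dotProduct_smul, smul_eq_mul] at this
  linarith
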